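/- Let U be an open subset of ℝⁿ with n ≥ 4, ω a smooth differential 2-form on U and β a smooth differential 1-form on U with dω = β ∧ ω. Then at every point x ∈ U where ω(x) ∧ ω(x) ∧ ω(x) ≠ 0 (i.e. where the rank of ω exceeds 2), the exterior derivative dβ vanishes: (dβ)(x) = 0. In particular, the set of points where the rank of ω exceeds 2 is open and dβ = 0 on it. -/

import Mathlib

set_option synthInstance.maxHeartbeats 1000000
set_option maxHeartbeats 1000000

noncomputable section

open ExteriorAlgebra

/-! ### Preamble: differential forms on open subsets of `ℝⁿ`

A (inhomogeneous) differential form on (an open subset of) `ℝⁿ` is modelled as a map from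
`ℝⁿ = Fin n → ℝ` into the exterior algebra `ExteriorAlgebra ℝ (Module.Dual ℝ (Fin n → ℝ))`
of the dual space; a differential `k`-form takes values in the `k`-th exterior power
`⋀[ℝ]^k (Module.Dual ℝ (Fin n → ℝ))`.  The wedge product is multiplication in the exterior
algebra.  To speak about continuity and differentiability we endow this (finite-dimensional)
exterior algebra with a norm, induced by a linear equivalence with `ℝ^d`; all norms on a
finite-dimensional real vector space are equivalent, so the resulting notions of continuous
and smooth differential forms do not depend on this choice.  The exterior derivative is
defined by the classical coordinate formula `dω = ∑ᵢ dxⁱ ∧ ∂ᵢω`. -/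

/-- The `i`-th exterior power of a finite-dimensional space vanishes for `i` larger
than the dimension. -/
theorem exteriorPower_eq_bot_of_finrank_lt {V : Type*} [AddCommGroup V] [Module ℝ V]
    [FiniteDimensional ℝ V] {i : ℕ} (hi : Module.finrank ℝ V < i) :
    ⋀[ℝ]^i V = ⊥ := by
  rw [← ιMulti_span_fixedDegree, Submodule.span_eq_bot]
  rintro x ⟨v, rfl⟩
  refine AlternatingMap.map_linearDependent _ v (fun h => ?_)
  have := h.fintype_card_le_finrank
  simp only [Fintype.card_fin] at this
  omega

/-- The exterior algebra of a finite-dimensional real vector space is finite-dimensional. -/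
instance instFiniteExteriorAlgebra {V : Type*} [AddCommGroup V] [Module ℝ V]
    [FiniteDimensional ℝ V] : Module.Finite ℝ (ExteriorAlgebra ℝ V) := by
  classical
  rw [Module.finite_def]
  set m := Module.finrank ℝ V
  have hfg : ∀ i : ℕ, (⋀[ℝ]^i V).FG := by
    intro i
    induction i with
    | zero =>
      rw [exteriorPower, pow_zero, Submodule.one_eq_span]
      exact Submodule.fg_span_singleton _
    | succ j ih =>
      rw [exteriorPower, pow_succ]
      exact Submodule.FG.mul ih
        (by rw [← Submodule.map_top]; exact Submodule.FG.map _ Module.Finite.fg_top)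
  set F : Submodule ℝ (ExteriorAlgebra ℝ V) := ∑ i ∈ Finset.range (m + 1), ⋀[ℝ]^i V with hF
  have hFfg : F.FG := by
    rw [hF]
    classical
    induction (Finset.range (m + 1)) using Finset.cons_induction with
    | empty => simpa using Submodule.fg_bot
    | cons a s ha ih =>
      rw [Finset.sum_cons, Submodule.add_eq_sup]
      exact Submodule.FG.sup (hfg a) ih
  have hle : ∀ i : ℕ, ⋀[ℝ]^i V ≤ F := by
    intro i
    by_cases h : i ≤ m
    · exact Finset.single_le_sum (f := fun i => ⋀[ℝ]^i V) (fun j _ => bot_le)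
        (Finset.mem_range.2 (by omega))
    · rw [exteriorPower_eq_bot_of_finrank_lt (by omega)]
      exact bot_le
  have htop : (⊤ : Submodule ℝ (ExteriorAlgebra ℝ V)) ≤ F := by
    intro x _
    rw [← DirectSum.sum_support_decompose (fun i : ℕ => ⋀[ℝ]^i V) x]
    exact Submodule.sum_mem _ fun i _ => hle i (DirectSum.decompose (fun i : ℕ => ⋀[ℝ]^i V) x i).2
  exact top_le_iff.mp htop ▸ hFfg

/-- The algebra of (inhomogeneous) exterior forms on `ℝⁿ`: the exterior algebra of the
dual space of `ℝⁿ`.  A `k`-form on `ℝⁿ` is an element of the submodule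
`⋀[ℝ]^k (Module.Dual ℝ (Fin n → ℝ))`. -/
abbrev FormAlgebra (n : ℕ) : Type := ExteriorAlgebra ℝ (Module.Dual ℝ (Fin n → ℝ))

/-- A norm on the (finite-dimensional) algebra of exterior forms on `ℝⁿ`, transported from
`ℝ^d` by a linear equivalence.  All norms on a finite-dimensional real space are equivalent,
so continuity/smoothness of form-valued maps does not depend on this choice. -/
instance instNormedFormAlgebra (n : ℕ) : NormedAddCommGroup (FormAlgebra n) :=
  NormedAddCommGroup.induced _ _ ((Module.finBasis ℝ (FormAlgebra n)).equivFun.toLinearMap)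
    (Module.finBasis ℝ (FormAlgebra n)).equivFun.injective

instance instNormedSpaceFormAlgebra (n : ℕ) : NormedSpace ℝ (FormAlgebra n) :=
  NormedSpace.induced ℝ _ _ ((Module.finBasis ℝ (FormAlgebra n)).equivFun.toLinearMap)

/-- The coordinate 1-forms `dxⁱ` on `ℝⁿ`. -/
def dx {n : ℕ} (i : Fin n) : FormAlgebra n := ExteriorAlgebra.ι ℝ (LinearMap.proj i)

/-- The exterior derivative of a form-valued map on `ℝⁿ`, via the classical coordinate
formula `dω = ∑ᵢ dxⁱ ∧ ∂ᵢω` (where `∂ᵢ` is the partial derivative in the direction of the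
`i`-th standard basis vector). -/
def extDerivCoord {n : ℕ} (ω : (Fin n → ℝ) → FormAlgebra n) (x : Fin n → ℝ) : FormAlgebra n :=
  ∑ i : Fin n, dx i * fderiv ℝ ω x (Pi.single i 1)

end

noncomputable section
open ExteriorAlgebra
variable {V : Type*} [AddCommGroup V] [Module ℝ V]

lemma mem2_induction {P : ExteriorAlgebra ℝ V → Prop}
    (hadd : ∀ x y, P x → P y → P (x + y))
    (hgen : ∀ a b : V, P (ι ℝ a * ι ℝ b)) {θ : ExteriorAlgebra ℝ V}
    (hθ : θ ∈ ⋀[ℝ]^2 V) : P θ := by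
  rw [exteriorPower, pow_two] at hθ
  exact Submodule.mul_induction_on hθ
    (by rintro m ⟨a, rfl⟩ m' ⟨b, rfl⟩; exact hgen a b) hadd

lemma ι_mul_anticomm (a b : V) : ι ℝ a * ι ℝ b = -(ι ℝ b * ι ℝ a) :=
  eq_neg_of_add_eq_zero_left (ι_add_mul_swap a b)

lemma gen_central (a b : V) (y : ExteriorAlgebra ℝ V) :
    (ι ℝ a * ι ℝ b) * y = y * (ι ℝ a * ι ℝ b) := by
  induction y using CliffordAlgebra.induction with
  | algebraMap r => exact (Algebra.commutes r _).symm
  | ι m =>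
    rw [mul_assoc, ι_mul_anticomm b m, mul_neg, ← mul_assoc, ι_mul_anticomm a m,
      neg_mul, neg_neg, mul_assoc]
  | mul x y hx hy => rw [← mul_assoc, hx, mul_assoc, hy, ← mul_assoc]
  | add x y hx hy => rw [mul_add, hx, hy, add_mul]

lemma central₂ {θ : ExteriorAlgebra ℝ V} (hθ : θ ∈ ⋀[ℝ]^2 V) (y : ExteriorAlgebra ℝ V) :
    θ * y = y * θ := by
  refine mem2_induction (P := fun θ => θ * y = y * θ) ?_ (fun a b => gen_central a b y) hθ
  intro x z hx hz
  rw [add_mul, hx, hz, mul_add]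

lemma contract_gen (d : Module.Dual ℝ V) (a b : V) :
    CliffordAlgebra.contractLeft d (ι ℝ a * ι ℝ b) = ι ℝ (d a • b - d b • a) := by
  rw [CliffordAlgebra.contractLeft_ι_mul d a, CliffordAlgebra.contractLeft_ι, map_sub, map_smul,
    map_smul, ← Algebra.commutes, ← Algebra.smul_def]

lemma contract_mem2 {θ : ExteriorAlgebra ℝ V} (hθ : θ ∈ ⋀[ℝ]^2 V) (d : Module.Dual ℝ V) :
    ∃ φ : V, CliffordAlgebra.contractLeft d θ = ι ℝ φ := by
  refine mem2_induction (P := fun θ => ∃ φ : V, CliffordAlgebra.contractLeft d θ = ι ℝ φ) ?_ ?_ hθ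
  · rintro x y ⟨φ, hφ⟩ ⟨ψ, hψ⟩; exact ⟨φ + ψ, by rw [map_add, hφ, hψ, map_add]⟩
  · intro a b; exact ⟨d a • b - d b • a, contract_gen d a b⟩

lemma contract_leibniz₂ {θ : ExteriorAlgebra ℝ V} (hθ : θ ∈ ⋀[ℝ]^2 V) (d : Module.Dual ℝ V)
    (y : ExteriorAlgebra ℝ V) :
    CliffordAlgebra.contractLeft d (θ * y)
      = CliffordAlgebra.contractLeft d θ * y + θ * CliffordAlgebra.contractLeft d y := by
  refine mem2_induction (P := fun θ => CliffordAlgebra.contractLeft d (θ * y)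
    = CliffordAlgebra.contractLeft d θ * y + θ * CliffordAlgebra.contractLeft d y) ?_ ?_ hθ
  · intro x z hx hz
    rw [add_mul, map_add, hx, hz, map_add, add_mul, add_mul]
    abel
  · intro a b
    rw [mul_assoc, CliffordAlgebra.contractLeft_ι_mul d a, contract_gen,
      CliffordAlgebra.contractLeft_ι_mul d b, mul_sub, map_sub, map_smul]
    simp only [map_smul, smul_sub, sub_mul, smul_mul_assoc, mul_sub, mul_smul_comm, mul_assoc]
    abel
section algebra
open ExteriorAlgebra
variable {V : Type*} [AddCommGroup V] [Module ℝ V]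

lemma number_formula [FiniteDimensional ℝ V] {θ : ExteriorAlgebra ℝ V} (hθ : θ ∈ ⋀[ℝ]^2 V) :
    ∑ i, ι ℝ (Module.finBasis ℝ V i)
      * CliffordAlgebra.contractLeft ((Module.finBasis ℝ V).coord i) θ = (2 : ℝ) • θ := by
  set b := Module.finBasis ℝ V with hb
  have key : ∀ v : V, ∑ i, b.coord i v • ι ℝ (b i) = ι ℝ v := by
    intro v
    simp_rw [← map_smul]
    rw [← map_sum]
    congr 1
    simp_rw [Module.Basis.coord_apply]
    exact b.sum_repr v
  refine mem2_induction (P := fun θ => ∑ i, ι ℝ (b i)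
      * CliffordAlgebra.contractLeft (b.coord i) θ = (2 : ℝ) • θ) ?_ ?_ hθ
  · intro x y hx hy
    simp only [map_add, mul_add, Finset.sum_add_distrib, hx, hy, smul_add]
  · intro a c
    have : ∀ i, ι ℝ (b i) * CliffordAlgebra.contractLeft (b.coord i) (ι ℝ a * ι ℝ c)
        = b.coord i a • (ι ℝ (b i) * ι ℝ c) - b.coord i c • (ι ℝ (b i) * ι ℝ a) := by
      intro i
      rw [contract_gen, map_sub, map_smul, map_smul, mul_sub, mul_smul_comm, mul_smul_comm]
    rw [Finset.sum_congr rfl (fun i _ => this i), Finset.sum_sub_distrib]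
    simp_rw [← smul_mul_assoc, ← Finset.sum_mul, key]
    rw [ι_mul_anticomm c a, sub_neg_eq_add, two_smul, add_mul]
end algebra
section wedge
open ExteriorAlgebra
variable {V : Type*} [AddCommGroup V] [Module ℝ V]

theorem wedge_cancel [FiniteDimensional ℝ V] {θ Ω : ExteriorAlgebra ℝ V}
    (hθ : θ ∈ ⋀[ℝ]^2 V) (hΩ : Ω ∈ ⋀[ℝ]^2 V) (h0 : θ * Ω = 0) (h3 : Ω * Ω * Ω ≠ 0) :
    θ = 0 := by
  have key1 : ∀ d : Module.Dual ℝ V, CliffordAlgebra.contractLeft d θ * (Ω * Ω) = 0 := by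
    intro d
    have h2 : θ * (Ω * Ω) = 0 := by rw [← mul_assoc, h0, zero_mul]
    have hthis := contract_leibniz₂ hθ d (Ω * Ω)
    rw [h2, map_zero] at hthis
    have hc : θ * CliffordAlgebra.contractLeft d (Ω * Ω) = 0 := by
      obtain ⟨ψ, hψ⟩ := contract_mem2 hΩ d
      have e1 : θ * (ι ℝ ψ * Ω) = 0 := by
        rw [← mul_assoc, central₂ hθ (ι ℝ ψ), mul_assoc, h0, mul_zero]
      have e2 : θ * (Ω * ι ℝ ψ) = 0 := by rw [← mul_assoc, h0, zero_mul]
      rw [contract_leibniz₂ hΩ d Ω, hψ, mul_add, e1, e2, add_zero]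
    rw [hc, add_zero] at hthis
    exact hthis.symm
  have key2 : ∀ d : Module.Dual ℝ V, CliffordAlgebra.contractLeft d θ = 0 := by
    intro d
    obtain ⟨φ, hφ⟩ := contract_mem2 hθ d
    suffices hzero : φ = 0 by rw [hφ, hzero, map_zero]
    rw [← Module.forall_dual_apply_eq_zero_iff ℝ]
    intro e
    have hι : ι ℝ φ * (Ω * Ω) = 0 := by rw [← hφ]; exact key1 d
    have hcon := congrArg (CliffordAlgebra.contractLeft e) hι
    rw [CliffordAlgebra.contractLeft_ι_mul e φ, map_zero] at hcon
    obtain ⟨ψ, hψ⟩ := contract_mem2 hΩ e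
    have expand : ι ℝ φ * CliffordAlgebra.contractLeft e (Ω * Ω) * Ω = 0 := by
      have t1 : ι ℝ φ * (ι ℝ ψ * Ω) * Ω = 0 := by
        rw [← mul_assoc, ι_mul_anticomm φ ψ, neg_mul, neg_mul, mul_assoc, mul_assoc, hι,
          mul_zero, neg_zero]
      have t2 : ι ℝ φ * (Ω * ι ℝ ψ) * Ω = 0 := by
        rw [central₂ hΩ (ι ℝ ψ)]; exact t1
      rw [contract_leibniz₂ hΩ e Ω, hψ, mul_add, add_mul, t1, t2, add_zero]
    have final : e φ • (Ω * Ω * Ω) = 0 := by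
      have hmul := congrArg (· * Ω) hcon
      simp only [sub_mul, smul_mul_assoc, zero_mul] at hmul
      rw [expand, sub_zero] at hmul
      exact hmul
    exact (smul_eq_zero.mp final).resolve_right h3
  have hform := number_formula hθ
  simp only [key2, mul_zero, Finset.sum_const_zero] at hform
  have h2θ : (2 : ℝ) • θ = 0 := hform.symm
  rcases smul_eq_zero.mp h2θ with h | h
  · exact absurd h two_ne_zero
  · exact h
end wedge
section analysis
open ExteriorAlgebra

variable {n : ℕ}

/-- Multiplication in the form algebra, as a continuous bilinear map. -/
def mulL : FormAlgebra n →L[ℝ] FormAlgebra n →L[ℝ] FormAlgebra n :=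
  LinearMap.toContinuousLinearMap
    { toFun := fun a => LinearMap.toContinuousLinearMap (LinearMap.mulLeft ℝ a)
      map_add' := by intro a b; ext c; simp [add_mul]
      map_smul' := by intro r a; ext c; simp [smul_mul_assoc] }

@[simp] lemma mulL_apply (a b : FormAlgebra n) : mulL a b = a * b := rfl

lemma diffAt_mul {f g : (Fin n → ℝ) → FormAlgebra n} {x : Fin n → ℝ}
    (hf : DifferentiableAt ℝ f x) (hg : DifferentiableAt ℝ g x) :
    DifferentiableAt ℝ (fun y => f y * g y) x := by
  have hc : DifferentiableAt ℝ (fun y => mulL (f y)) x :=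
    (mulL.hasFDerivAt.comp x hf.hasFDerivAt).differentiableAt
  exact hc.clm_apply hg

lemma fderiv_mul_apply {f g : (Fin n → ℝ) → FormAlgebra n} {x : Fin n → ℝ}
    (hf : DifferentiableAt ℝ f x) (hg : DifferentiableAt ℝ g x) (v : Fin n → ℝ) :
    fderiv ℝ (fun y => f y * g y) x v
      = fderiv ℝ f x v * g x + f x * fderiv ℝ g x v := by
  have hc' : HasFDerivAt (fun y => mulL (f y)) (mulL.comp (fderiv ℝ f x)) x :=
    mulL.hasFDerivAt.comp x hf.hasFDerivAt
  have h := fderiv_clm_apply hc'.differentiableAt hg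
  have h2 : fderiv ℝ (fun y => mulL (f y)) x = mulL.comp (fderiv ℝ f x) := hc'.fderiv
  rw [h2] at h
  have : fderiv ℝ (fun y => f y * g y) x = fderiv ℝ (fun y => mulL (f y) (g y)) x := rfl
  rw [this, h]
  simp [add_comm]

lemma diffAt_const_mul (c : FormAlgebra n) {g : (Fin n → ℝ) → FormAlgebra n} {x : Fin n → ℝ}
    (hg : DifferentiableAt ℝ g x) : DifferentiableAt ℝ (fun y => c * g y) x :=
  diffAt_mul (differentiableAt_const c) hg

lemma fderiv_const_mul_apply (c : FormAlgebra n) {g : (Fin n → ℝ) → FormAlgebra n}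
    {x : Fin n → ℝ} (hg : DifferentiableAt ℝ g x) (v : Fin n → ℝ) :
    fderiv ℝ (fun y => c * g y) x v = c * fderiv ℝ g x v := by
  rw [fderiv_mul_apply (differentiableAt_const c) hg v, fderiv_fun_const, Pi.zero_apply]
  simp

lemma extDeriv_congr {f g : (Fin n → ℝ) → FormAlgebra n} {x : Fin n → ℝ}
    (h : f =ᶠ[nhds x] g) : extDerivCoord f x = extDerivCoord g x := by
  unfold extDerivCoord
  rw [h.fderiv_eq]

end analysis
end
noncomputable section
section analysis2
open ExteriorAlgebra
variable {n : ℕ}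

lemma fderiv_mem {p : Submodule ℝ (FormAlgebra n)} {f : (Fin n → ℝ) → FormAlgebra n}
    {U : Set (Fin n → ℝ)} (hU : IsOpen U) {x : Fin n → ℝ} (hx : x ∈ U)
    (hf : DifferentiableAt ℝ f x) (hmem : ∀ y ∈ U, f y ∈ p) (v : Fin n → ℝ) :
    fderiv ℝ f x v ∈ p := by
  have hline : HasDerivAt (fun t : ℝ => x + t • v) v 0 := by
    simpa using ((hasDerivAt_id (0 : ℝ)).smul_const v).const_add x
  have hl : HasFDerivAt f (fderiv ℝ f x) ((fun t : ℝ => x + t • v) 0) := by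
    simpa using hf.hasFDerivAt
  have hg : HasDerivAt (fun t : ℝ => f (x + t • v)) (fderiv ℝ f x v) 0 :=
    hl.comp_hasDerivAt 0 hline
  have hten := hasDerivAt_iff_tendsto_slope.mp hg
  have hclosed : IsClosed (p : Set (FormAlgebra n)) := Submodule.closed_of_finiteDimensional p
  refine hclosed.mem_of_tendsto hten ?_
  have hcont : ContinuousAt (fun t : ℝ => x + t • v) 0 :=
    (continuous_const.add (continuous_id.smul continuous_const)).continuousAt
  have hUev : ∀ᶠ t in nhds (0 : ℝ), x + t • v ∈ U :=
    hcont.preimage_mem_nhds (by simpa using hU.mem_nhds hx)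
  filter_upwards [nhdsWithin_le_nhds hUev] with t ht
  rw [slope_def_module]
  refine p.smul_mem _ (p.sub_mem (hmem _ ht) ?_)
  simpa using hmem x hx

lemma extDeriv_mem_two {β : (Fin n → ℝ) → FormAlgebra n} {U : Set (Fin n → ℝ)}
    (hU : IsOpen U) {x : Fin n → ℝ} (hx : x ∈ U) (hβd : DifferentiableAt ℝ β x)
    (hβ1 : ∀ y ∈ U, β y ∈ ⋀[ℝ]^1 (Module.Dual ℝ (Fin n → ℝ))) :
    extDerivCoord β x ∈ ⋀[ℝ]^2 (Module.Dual ℝ (Fin n → ℝ)) := by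
  refine Submodule.sum_mem _ fun i _ => ?_
  have h1 : dx i ∈ LinearMap.range (ι ℝ : Module.Dual ℝ (Fin n → ℝ) →ₗ[ℝ] FormAlgebra n) :=
    ⟨_, rfl⟩
  have h2 : fderiv ℝ β x (Pi.single i 1)
      ∈ LinearMap.range (ι ℝ : Module.Dual ℝ (Fin n → ℝ) →ₗ[ℝ] FormAlgebra n) := by
    have := fderiv_mem hU hx hβd hβ1 (Pi.single i 1)
    rwa [exteriorPower, pow_one] at this
  show _ ∈ LinearMap.range (ι ℝ : Module.Dual ℝ (Fin n → ℝ) →ₗ[ℝ] FormAlgebra n) ^ 2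
  rw [pow_two]
  exact Submodule.mul_mem_mul h1 h2

lemma extDeriv_mul_of_one {β ω : (Fin n → ℝ) → FormAlgebra n} {x : Fin n → ℝ}
    (hβd : DifferentiableAt ℝ β x) (hωd : DifferentiableAt ℝ ω x)
    (h1 : β x ∈ ⋀[ℝ]^1 (Module.Dual ℝ (Fin n → ℝ))) :
    extDerivCoord (fun y => β y * ω y) x = extDerivCoord β x * ω x - β x * extDerivCoord ω x := by
  rw [exteriorPower, pow_one] at h1
  obtain ⟨φ, hφ⟩ := h1
  have hterm : ∀ i : Fin n, dx i * fderiv ℝ (fun y => β y * ω y) x (Pi.single i 1)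
      = (dx i * fderiv ℝ β x (Pi.single i 1)) * ω x
        - β x * (dx i * fderiv ℝ ω x (Pi.single i 1)) := by
    intro i
    rw [fderiv_mul_apply hβd hωd, mul_add, ← mul_assoc, ← mul_assoc, ← hφ]
    rw [show dx i * ι ℝ φ = -(ι ℝ φ * dx i) from ι_mul_anticomm _ _]
    rw [neg_mul, mul_assoc, sub_eq_add_neg, mul_assoc (ι ℝ φ)]
  show (∑ i : Fin n, dx i * fderiv ℝ (fun y => β y * ω y) x (Pi.single i 1)) = _
  rw [Finset.sum_congr rfl fun i _ => hterm i, Finset.sum_sub_distrib, ← Finset.sum_mul,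
    ← Finset.mul_sum]
  rfl
end analysis2
end
noncomputable section
section dd
open ExteriorAlgebra
variable {n : ℕ}

lemma extDeriv_extDeriv_eq_zero {f : (Fin n → ℝ) → FormAlgebra n} {U : Set (Fin n → ℝ)}
    (hU : IsOpen U) (hf : ContDiffOn ℝ (⊤ : ℕ∞) f U) {x : Fin n → ℝ} (hx : x ∈ U) :
    extDerivCoord (extDerivCoord f) x = 0 := by
  have hUx : U ∈ nhds x := hU.mem_nhds hx
  have hf1 : ContDiffOn ℝ (⊤ : ℕ∞) (fun y => fderiv ℝ f y) U :=
    hf.fderiv_of_isOpen hU (by simp)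
  have hdf : DifferentiableAt ℝ (fun y => fderiv ℝ f y) x :=
    (hf1.differentiableOn (by norm_cast)).differentiableAt hUx
  have hgi : ∀ i : Fin n, DifferentiableAt ℝ (fun y => fderiv ℝ f y (Pi.single i 1)) x :=
    fun i => hdf.clm_apply (differentiableAt_const _)
  have hterm : ∀ i : Fin n,
      DifferentiableAt ℝ (fun y => dx i * fderiv ℝ f y (Pi.single i 1)) x :=
    fun i => diffAt_const_mul _ (hgi i)
  have hsym : ∀ v w : Fin n → ℝ,
      fderiv ℝ (fderiv ℝ f) x v w = fderiv ℝ (fderiv ℝ f) x w v := by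
    have hca : ContDiffAt ℝ (⊤ : ℕ∞) f x := hf.contDiffAt hUx
    exact hca.isSymmSndFDerivAt (by rw [minSmoothness_of_isRCLikeNormedField]; exact WithTop.coe_le_coe.mpr le_top)
  set H : Fin n → Fin n → FormAlgebra n :=
    fun j i => fderiv ℝ (fderiv ℝ f) x (Pi.single j 1) (Pi.single i 1) with hH
  have hfder : ∀ j : Fin n, fderiv ℝ (extDerivCoord f) x (Pi.single j 1)
      = ∑ i : Fin n, dx i * H j i := by
    intro j
    have hrw : extDerivCoord f = fun y => ∑ i : Fin n, dx i * fderiv ℝ f y (Pi.single i 1) := rfl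
    rw [hrw, fderiv_fun_sum (fun i _ => hterm i), ContinuousLinearMap.sum_apply]
    refine Finset.sum_congr rfl fun i _ => ?_
    rw [fderiv_const_mul_apply (dx i) (hgi i)]
    congr 1
    rw [fderiv_clm_apply hdf (differentiableAt_const _)]
    simp [hH]
  have hmain : extDerivCoord (extDerivCoord f) x = ∑ j : Fin n, ∑ i : Fin n, dx j * (dx i * H j i) := by
    show (∑ j : Fin n, dx j * fderiv ℝ (extDerivCoord f) x (Pi.single j 1)) = _
    refine Finset.sum_congr rfl fun j _ => ?_
    rw [hfder j, Finset.mul_sum]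
  have hanti : ∀ j i : Fin n, dx j * (dx i * H j i) = -(dx i * (dx j * H i j)) := by
    intro j i
    have h1 : H j i = H i j := hsym _ _
    rw [h1, ← mul_assoc, show dx j * dx i = -(dx i * dx j) from ι_mul_anticomm _ _,
      neg_mul, mul_assoc]
  rw [hmain]
  have hS : (∑ j : Fin n, ∑ i : Fin n, dx j * (dx i * H j i))
      = -∑ j : Fin n, ∑ i : Fin n, dx j * (dx i * H j i) := by
    conv_lhs => rw [Finset.sum_comm]
    rw [← Finset.sum_neg_distrib]
    refine Finset.sum_congr rfl fun j _ => ?_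
    rw [← Finset.sum_neg_distrib]
    exact Finset.sum_congr rfl fun i _ => hanti i j
  have h2S := congrArg (fun z => z + ∑ j : Fin n, ∑ i : Fin n, dx j * (dx i * H j i)) hS
  simp only [neg_add_cancel] at h2S
  rw [← two_smul ℝ] at h2S
  rcases smul_eq_zero.mp h2S with h | h
  · exact absurd h two_ne_zero
  · exact h
end dd
end
noncomputable section
open ExteriorAlgebra

/-!
STATEMENT 11: if `n ≥ 4`, `ω` is a smooth 2-form and `β` a smooth 1-form on an open set
`U ⊆ ℝⁿ` with `dω = β ∧ ω`, then `dβ = 0` at every point where `ω ∧ ω ∧ ω ≠ 0` (rank of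
`ω` exceeds 2); in particular the set of such points is open and `dβ = 0` on it.
-/
theorem statement11 (n : ℕ) (hn : 4 ≤ n) (U : Set (Fin n → ℝ)) (hU : IsOpen U)
    (ω β : (Fin n → ℝ) → FormAlgebra n)
    (hω2 : ∀ x ∈ U, ω x ∈ ⋀[ℝ]^2 (Module.Dual ℝ (Fin n → ℝ)))
    (hβ1 : ∀ x ∈ U, β x ∈ ⋀[ℝ]^1 (Module.Dual ℝ (Fin n → ℝ)))
    (hωs : ContDiffOn ℝ (⊤ : ℕ∞) ω U) (hβs : ContDiffOn ℝ (⊤ : ℕ∞) β U)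
    (heq : ∀ x ∈ U, extDerivCoord ω x = β x * ω x) :
    (∀ x ∈ U, ω x ^ 3 ≠ 0 → extDerivCoord β x = 0) ∧
    IsOpen {x | x ∈ U ∧ ω x ^ 3 ≠ 0} := by
  constructor
  · intro x hx hx3
    have hUx : U ∈ nhds x := hU.mem_nhds hx
    have hβd : DifferentiableAt ℝ β x :=
      (hβs.differentiableOn (by norm_cast)).differentiableAt hUx
    have hωd : DifferentiableAt ℝ ω x :=
      (hωs.differentiableOn (by norm_cast)).differentiableAt hUx
    obtain ⟨φ, hφ⟩ : ∃ φ, ι ℝ φ = β x := by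
      have h1 := hβ1 x hx
      rwa [exteriorPower, pow_one] at h1
    have e1 : extDerivCoord (extDerivCoord ω) x = 0 := extDeriv_extDeriv_eq_zero hU hωs hx
    have e2 : extDerivCoord (extDerivCoord ω) x = extDerivCoord (fun y => β y * ω y) x :=
      extDeriv_congr (Filter.eventuallyEq_of_mem hUx fun y hy => heq y hy)
    have e3 : extDerivCoord (fun y => β y * ω y) x = extDerivCoord β x * ω x - β x * extDerivCoord ω x :=
      extDeriv_mul_of_one hβd hωd (hβ1 x hx)
    have e4 : β x * extDerivCoord ω x = 0 := by
      rw [heq x hx, ← mul_assoc, ← hφ, ExteriorAlgebra.ι_sq_zero, zero_mul]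
    have h0 : extDerivCoord β x * ω x = 0 := by
      have := e1
      rw [e2, e3, e4, sub_zero] at this
      exact this
    have h3 : ω x * ω x * ω x ≠ 0 := by
      rwa [show ω x * ω x * ω x = ω x ^ 3 by rw [pow_succ, pow_two]]
    exact wedge_cancel (extDeriv_mem_two hU hx hβd hβ1) (hω2 x hx) h0 h3
  · have hcontω : ContinuousOn ω U := hωs.continuousOn
    have hbil : Continuous (fun p : FormAlgebra n × FormAlgebra n => mulL p.1 p.2) :=
      mulL.isBoundedBilinearMap.continuous
    have h2 : ContinuousOn (fun x => ω x * ω x) U :=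
      by have := hbil.comp_continuousOn (hcontω.prodMk hcontω); exact this
    have h3 : ContinuousOn (fun x => ω x * ω x * ω x) U :=
      hbil.comp_continuousOn (h2.prodMk hcontω)
    have h3' : ContinuousOn (fun x => ω x ^ 3) U := by
      have : (fun x => ω x ^ 3) = fun x => ω x * ω x * ω x := by
        funext y; rw [pow_succ, pow_two]
      rw [this]; exact h3
    have hset : {x | x ∈ U ∧ ω x ^ 3 ≠ 0} = U ∩ (fun x => ω x ^ 3) ⁻¹' ({0}ᶜ) := by
      ext y; simp [Set.mem_setOf_eq]
    rw [hset]
    exact h3'.isOpen_inter_preimage hU isOpen_compl_singleton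

end
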